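/- The piecewise potential σ with β = 2 is twice continuously differentiable at s = d² if and only if k_r = α² k_a. -/

import Mathlib

open Real Set Filter Topology

noncomputable def Gfun (ka α D : ℝ) : ℝ → ℝ :=
  fun s => 2 * ka * α / D * ((s / D) ^ (α - 1) * ((s / D) ^ α - 1))

noncomputable def Gder (ka α D : ℝ) : ℝ → ℝ :=
  fun s => 2 * ka * α / D *
    (1 / D * (α - 1) * (s / D) ^ (α - 1 - 1) * ((s / D) ^ α - 1) +
      (s / D) ^ (α - 1) * (1 / D * α * (s / D) ^ (α - 1)))

lemma hasDerivAt_left (kr D s : ℝ) (hD : D ≠ 0) :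
    HasDerivAt (fun s : ℝ => kr * (1 - s / D) ^ (2 : ℕ)) (2 * kr / D ^ 2 * (s - D)) s := by
  have h := (((hasDerivAt_id' (x := s)).div_const D).const_sub 1).pow 2 |>.const_mul kr
  refine h.congr_deriv ?_
  rw [show (2 - 1 : ℕ) = 1 from rfl, pow_one]
  field_simp
  ring

lemma hasDerivAt_right (ka α D : ℝ) {s : ℝ} (hs : s / D ≠ 0) :
    HasDerivAt (fun s : ℝ => ka * ((s / D) ^ α - 1) ^ (2 : ℕ)) (Gfun ka α D s) s := by
  have h1 : HasDerivAt (fun s : ℝ => s / D) (1 / D) s := (hasDerivAt_id' (x := s)).div_const D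
  have h2 := ((h1.rpow_const (p := α) (Or.inl hs)).sub_const 1).pow 2 |>.const_mul ka
  refine h2.congr_deriv ?_
  simp only [Gfun, pow_one]
  ring

lemma hasDerivAt_Gfun (ka α D : ℝ) {s : ℝ} (hs : s / D ≠ 0) :
    HasDerivAt (Gfun ka α D) (Gder ka α D s) s := by
  have h1 : HasDerivAt (fun s : ℝ => s / D) (1 / D) s := (hasDerivAt_id' (x := s)).div_const D
  have h2 := h1.rpow_const (p := α - 1) (Or.inl hs)
  have h3 := (h1.rpow_const (p := α) (Or.inl hs)).sub_const 1
  exact (h2.mul h3).const_mul _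

lemma Gfun_at_D (ka α D : ℝ) (hD : D ≠ 0) : Gfun ka α D D = 0 := by
  simp [Gfun, div_self hD]

lemma Gder_at_D (ka α D : ℝ) (hD : D ≠ 0) : Gder ka α D D = 2 * ka * α ^ 2 / D ^ 2 := by
  simp only [Gder, div_self hD, Real.one_rpow]
  field_simp
  ring

lemma contAt_Gder (ka α D : ℝ) {s : ℝ} (hs : s / D ≠ 0) : ContinuousAt (Gder ka α D) s := by
  have hc : ∀ c : ℝ, ContinuousAt (fun s : ℝ => (s / D) ^ c) s := fun c =>
    (continuousAt_id.div_const D).rpow_const (Or.inl hs)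
  exact continuousAt_const.mul
    (((continuousAt_const.mul (hc _)).mul ((hc _).sub continuousAt_const)).add
      ((hc _).mul (continuousAt_const.mul (hc _))))

/-- For β = 2, the piecewise potential is twice continuously differentiable
at the junction s = d² if and only if k_r = α² k_a. -/
theorem stmt_3 (d kr ka α : ℝ) (hd : 0 < d) (hkr : 0 ≤ kr) (hka : 0 ≤ ka)
    (hα : 0 < α) (σ : ℝ → ℝ)
    (hσ : ∀ s, σ s =
      if s < d ^ 2 then kr * (1 - s / d ^ 2) ^ (2 : ℕ)
      else ka * ((s / d ^ 2) ^ α - 1) ^ (2 : ℕ)) :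
    ContDiffAt ℝ 2 σ (d ^ 2) ↔ kr = α ^ 2 * ka := by
  set D := d ^ 2 with hDdef
  have hD : 0 < D := by positivity
  have hDne : D ≠ 0 := hD.ne'
  have hDD : D / D ≠ 0 := by rw [div_self hDne]; exact one_ne_zero
  have hσlt : ∀ s : ℝ, s < D → σ s = kr * (1 - s / D) ^ (2 : ℕ) := fun s hs => by
    rw [hσ s, if_pos hs]
  have hσge : ∀ s : ℝ, D ≤ s → σ s = ka * ((s / D) ^ α - 1) ^ (2 : ℕ) := fun s hs => by
    rw [hσ s, if_neg (not_lt.mpr hs)]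
  have hσD : σ D = 0 := by rw [hσge D le_rfl]; simp [div_self hDne]
  have hFD : kr * (1 - D / D) ^ (2 : ℕ) = 0 := by simp [div_self hDne]
  have hevF : ∀ s : ℝ, s < D → σ =ᶠ[𝓝 s] fun s => kr * (1 - s / D) ^ (2 : ℕ) :=
    fun s hs => eventuallyEq_of_mem (Iio_mem_nhds hs) fun y hy => hσlt y hy
  have hevG : ∀ s : ℝ, D < s → σ =ᶠ[𝓝 s] fun s => ka * ((s / D) ^ α - 1) ^ (2 : ℕ) :=
    fun s hs => eventuallyEq_of_mem (Ioi_mem_nhds hs) fun y hy => hσge y (le_of_lt hy)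
  constructor
  · intro h
    have hdσ : DifferentiableAt ℝ σ D := h.differentiableAt (by norm_num)
    have hΦdiff : DifferentiableAt ℝ (deriv σ) D := by
      have h1 : ContDiffAt ℝ 1 (fderiv ℝ σ) D := h.fderiv_right (by norm_num)
      have h2 : DifferentiableAt ℝ (fderiv ℝ σ) D := h1.differentiableAt (by norm_num)
      exact h2.clm_apply (differentiableAt_const 1)
    have hΦleft : ∀ s : ℝ, s < D → deriv σ s = 2 * kr / D ^ 2 * (s - D) := fun s hs => by
      rw [(hevF s hs).deriv_eq]
      exact (hasDerivAt_left kr D s hDne).deriv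
    have hΦright : ∀ s : ℝ, D < s → deriv σ s = Gfun ka α D s := fun s hs => by
      rw [(hevG s hs).deriv_eq]
      exact (hasDerivAt_right ka α D (ne_of_gt (div_pos (hD.trans hs) hD))).deriv
    have hΦD : deriv σ D = 0 := by
      have hF : HasDerivWithinAt (fun s : ℝ => kr * (1 - s / D) ^ (2 : ℕ)) 0 (Iio D) D := by
        simpa using (hasDerivAt_left kr D D hDne).hasDerivWithinAt
      have hσW : HasDerivWithinAt σ 0 (Iio D) D :=
        hF.congr (fun y hy => hσlt y hy) (hσD.trans hFD.symm)
      have e1 := hσW.derivWithin (uniqueDiffWithinAt_Iio D)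
      have e2 := (hdσ.hasDerivAt.hasDerivWithinAt (s := Iio D)).derivWithin
        (uniqueDiffWithinAt_Iio D)
      rw [← e2, e1]
    have hder : HasDerivAt (deriv σ) (deriv (deriv σ) D) D := hΦdiff.hasDerivAt
    have hLc : deriv (deriv σ) D = 2 * kr / D ^ 2 := by
      have hL : HasDerivWithinAt (fun s : ℝ => 2 * kr / D ^ 2 * (s - D))
          (deriv (deriv σ) D) (Iio D) D :=
        hder.hasDerivWithinAt.congr (fun y hy => (hΦleft y hy).symm) (by rw [hΦD]; ring)
      have hL' : HasDerivWithinAt (fun s : ℝ => 2 * kr / D ^ 2 * (s - D))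
          (2 * kr / D ^ 2) (Iio D) D := by
        simpa using (((hasDerivAt_id' (x := D)).sub_const D).const_mul
          (2 * kr / D ^ 2)).hasDerivWithinAt (s := Iio D)
      have e1 := hL.derivWithin (uniqueDiffWithinAt_Iio D)
      have e2 := hL'.derivWithin (uniqueDiffWithinAt_Iio D)
      rw [← e1, e2]
    have hRc : deriv (deriv σ) D = 2 * ka * α ^ 2 / D ^ 2 := by
      have hG : HasDerivWithinAt (Gfun ka α D) (deriv (deriv σ) D) (Ioi D) D :=
        hder.hasDerivWithinAt.congr (fun y hy => (hΦright y hy).symm)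
          ((Gfun_at_D ka α D hDne).trans hΦD.symm)
      have hG' : HasDerivWithinAt (Gfun ka α D) (Gder ka α D D) (Ioi D) D :=
        (hasDerivAt_Gfun ka α D hDD).hasDerivWithinAt
      have e1 := hG.derivWithin (uniqueDiffWithinAt_Ioi D)
      have e2 := hG'.derivWithin (uniqueDiffWithinAt_Ioi D)
      rw [← e1, e2, Gder_at_D ka α D hDne]
    rw [hLc] at hRc
    field_simp at hRc
    linarith
  · intro hk
    set Φ : ℝ → ℝ := fun s => if s < D then 2 * kr / D ^ 2 * (s - D) else Gfun ka α D s
      with hΦdef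
    set Ψ : ℝ → ℝ := fun s => if s < D then 2 * kr / D ^ 2 else Gder ka α D s with hΨdef
    have hΦlt : ∀ y : ℝ, y < D → Φ y = 2 * kr / D ^ 2 * (y - D) := fun y hy => by
      simp only [hΦdef, if_pos hy]
    have hΦge : ∀ y : ℝ, D ≤ y → Φ y = Gfun ka α D y := fun y hy => by
      simp only [hΦdef, if_neg (not_lt.mpr hy)]
    have hΦD : Φ D = 0 := (hΦge D le_rfl).trans (Gfun_at_D ka α D hDne)
    have hΨlt : ∀ y : ℝ, y < D → Ψ y = 2 * kr / D ^ 2 := fun y hy => by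
      simp only [hΨdef, if_pos hy]
    have hΨge : ∀ y : ℝ, D ≤ y → Ψ y = Gder ka α D y := fun y hy => by
      simp only [hΨdef, if_neg (not_lt.mpr hy)]
    have hΨD : Ψ D = 2 * kr / D ^ 2 := by
      rw [hΨge D le_rfl, Gder_at_D ka α D hDne, hk]; ring
    have hA : ∀ s ∈ Ioi (0 : ℝ), HasDerivAt σ (Φ s) s := by
      intro s hs
      rcases lt_trichotomy s D with hlt | heq | hgt
      · rw [hΦlt s hlt]
        exact (hasDerivAt_left kr D s hDne).congr_of_eventuallyEq (hevF s hlt)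
      · subst heq
        rw [hΦD]
        have hFW : HasDerivWithinAt σ 0 (Iic D) D := by
          have hF : HasDerivWithinAt (fun y : ℝ => kr * (1 - y / D) ^ (2 : ℕ)) 0 (Iic D) D := by
            simpa using (hasDerivAt_left kr D D hDne).hasDerivWithinAt (s := Iic D)
          refine hF.congr (fun y hy => ?_) (hσD.trans hFD.symm)
          rcases lt_or_eq_of_le (mem_Iic.mp hy) with h' | h'
          · exact hσlt y h'
          · rw [h']; exact hσD.trans hFD.symm
        have hGW : HasDerivWithinAt σ 0 (Ici D) D := by
          have hG0 : HasDerivWithinAt (fun y : ℝ => ka * ((y / D) ^ α - 1) ^ (2 : ℕ))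
              0 (Ici D) D := by
            have h0 := (hasDerivAt_right ka α D hDD).hasDerivWithinAt (s := Ici D)
            rwa [Gfun_at_D ka α D hDne] at h0
          exact hG0.congr (fun y hy => hσge y hy) (hσge D le_rfl)
        have hu := hFW.union hGW
        rwa [Iic_union_Ici, hasDerivWithinAt_univ] at hu
      · rw [hΦge s hgt.le]
        exact (hasDerivAt_right ka α D (ne_of_gt (div_pos hs hD))).congr_of_eventuallyEq
          (hevG s hgt)
    have hB : ∀ s ∈ Ioi (0 : ℝ), HasDerivAt Φ (Ψ s) s := by
      intro s hs
      rcases lt_trichotomy s D with hlt | heq | hgt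
      · rw [hΨlt s hlt]
        have hL : HasDerivAt (fun y : ℝ => 2 * kr / D ^ 2 * (y - D)) (2 * kr / D ^ 2) s := by
          simpa using ((hasDerivAt_id' (x := s)).sub_const D).const_mul (2 * kr / D ^ 2)
        exact hL.congr_of_eventuallyEq
          (eventuallyEq_of_mem (Iio_mem_nhds hlt) fun y hy => hΦlt y hy)
      · subst heq
        rw [hΨD]
        have hLW : HasDerivWithinAt Φ (2 * kr / D ^ 2) (Iic D) D := by
          have hL : HasDerivWithinAt (fun y : ℝ => 2 * kr / D ^ 2 * (y - D))
              (2 * kr / D ^ 2) (Iic D) D := by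
            simpa using (((hasDerivAt_id' (x := D)).sub_const D).const_mul
              (2 * kr / D ^ 2)).hasDerivWithinAt (s := Iic D)
          refine hL.congr (fun y hy => ?_) (by rw [hΦD]; ring)
          rcases lt_or_eq_of_le (mem_Iic.mp hy) with h' | h'
          · exact hΦlt y h'
          · rw [h', hΦD]; ring
        have hRW : HasDerivWithinAt Φ (2 * kr / D ^ 2) (Ici D) D := by
          have hG := (hasDerivAt_Gfun ka α D hDD).hasDerivWithinAt (s := Ici D)
          rw [Gder_at_D ka α D hDne] at hG
          have h2 : HasDerivWithinAt Φ (2 * ka * α ^ 2 / D ^ 2) (Ici D) D :=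
            hG.congr (fun y hy => hΦge y hy) (hΦge D le_rfl)
          have he : (2 : ℝ) * kr / D ^ 2 = 2 * ka * α ^ 2 / D ^ 2 := by rw [hk]; ring
          rwa [he]
        have hu := hLW.union hRW
        rwa [Iic_union_Ici, hasDerivWithinAt_univ] at hu
      · rw [hΨge s hgt.le]
        exact (hasDerivAt_Gfun ka α D (ne_of_gt (div_pos hs hD))).congr_of_eventuallyEq
          (eventuallyEq_of_mem (Ioi_mem_nhds hgt) fun y hy => hΦge y (le_of_lt hy))
    have hC : ContinuousOn Ψ (Ioi 0) := by
      intro s hs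
      rcases lt_trichotomy s D with hlt | heq | hgt
      · exact (continuousAt_const.congr
          (eventuallyEq_of_mem (Iio_mem_nhds hlt) fun y hy => (hΨlt y hy).symm)).continuousWithinAt
      · subst heq
        have h1 : ContinuousWithinAt Ψ (Iic D) D := by
          refine continuousWithinAt_const.congr (fun y hy => ?_) hΨD
          rcases lt_or_eq_of_le (mem_Iic.mp hy) with h' | h'
          · exact hΨlt y h'
          · rw [h']; exact hΨD
        have h2 : ContinuousWithinAt Ψ (Ici D) D := by
          refine (contAt_Gder ka α D hDD).continuousWithinAt.congr
            (fun y hy => hΨge y hy) (hΨge D le_rfl)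
        have hu := h1.union h2
        rw [Iic_union_Ici] at hu
        exact hu.mono (subset_univ _)
      · exact ((contAt_Gder ka α D (ne_of_gt (div_pos hs hD))).congr
          (eventuallyEq_of_mem (Ioi_mem_nhds hgt)
            fun y hy => (hΨge y (le_of_lt hy)).symm)).continuousWithinAt
    have hEq1 : Set.EqOn (deriv σ) Φ (Ioi 0) := fun s hs => (hA s hs).deriv
    have hEq2 : Set.EqOn (deriv Φ) Ψ (Ioi 0) := fun s hs => (hB s hs).deriv
    have hΦC1 : ContDiffOn ℝ 1 Φ (Ioi 0) := by
      rw [show (1 : WithTop ℕ∞) = 0 + 1 from rfl, contDiffOn_succ_iff_deriv_of_isOpen isOpen_Ioi]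
      refine ⟨fun s hs => (hB s hs).differentiableAt.differentiableWithinAt, by simp, ?_⟩
      rw [contDiffOn_zero]
      exact hC.congr hEq2
    have hσC2 : ContDiffOn ℝ 2 σ (Ioi 0) := by
      rw [show (2 : WithTop ℕ∞) = 1 + 1 from rfl, contDiffOn_succ_iff_deriv_of_isOpen isOpen_Ioi]
      exact ⟨fun s hs => (hA s hs).differentiableAt.differentiableWithinAt, by simp,
        hΦC1.congr hEq1⟩
    exact hσC2.contDiffAt (Ioi_mem_nhds hD)
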